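/- arXiv:2507.18662 — 4 statements merged into one kernel-verified Lean document; each statement's English description precedes it below -/
import Mathlib

section
/- Let p > 1, and let v solve (|v'|^(p-2)v')' + h(t) f(v) = 0 on [0, z] with v(0) = 0, v'(0) = a > 0, where h > 0 is decreasing and f = F' with F(0) = 0. If v(z) = 0 and v'(z) = 0 for some z > 0, then v ≡ 0 on [0, z]; in particular, since v'(0) = a > 0, any zero z ∈ (0, T) of v satisfies v'(z) ≠ 0. -/
set_option maxHeartbeats 1000000

open Real Set Filter Topology



lemma auxContAbsRpow {p : ℝ} (hp0 : 0 ≤ p) : Continuous (fun y : ℝ => |y| ^ p) := by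
  rw [continuous_iff_continuousAt]
  intro y
  exact (Real.continuousAt_rpow_const |y| p (Or.inr hp0)).comp continuous_abs.continuousAt

lemma auxAbsRpowDeriv {q : ℝ} (hq : 1 < q) (x : ℝ) :
    HasDerivAt (fun y : ℝ => |y| ^ q) (q * |x| ^ (q - 2) * x) x := by
  rcases lt_trichotomy x 0 with hx | hx | hx
  · have hev : (fun y : ℝ => |y| ^ q) =ᶠ[nhds x] (fun y : ℝ => (-y) ^ q) := by
      filter_upwards [eventually_lt_nhds hx] with y hy
      rw [abs_of_neg hy]
    have hbase : HasDerivAt (fun t : ℝ => t ^ q) (q * (-x) ^ (q - 1)) (-x) :=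
      Real.hasDerivAt_rpow_const (Or.inl (by linarith))
    have hneg : HasDerivAt (fun y : ℝ => -y) (-1) x := (hasDerivAt_id x).neg
    have := hbase.comp x hneg
    have hval : q * (-x) ^ (q - 1) * (-1) = q * |x| ^ (q - 2) * x := by
      rw [abs_of_neg hx]
      have : (-x) ^ (q - 1) = (-x) ^ (q - 2) * (-x) := by
        rw [show q - 1 = (q - 2) + 1 by ring, Real.rpow_add_one (by linarith)]
      rw [this]; ring
    exact hval ▸ (this.congr_of_eventuallyEq hev)
  · subst hx
    have hval : q * |(0:ℝ)| ^ (q - 2) * 0 = 0 := by ring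
    rw [hval]
    rw [hasDerivAt_iff_tendsto_slope]
    have h1 : ∀ᶠ y in 𝓝[≠] (0:ℝ), ‖slope (fun y : ℝ => |y| ^ q) 0 y‖ ≤ |y| ^ (q - 1) := by
      filter_upwards [self_mem_nhdsWithin] with y hy
      have hy' : y ≠ 0 := hy
      have h5 : slope (fun y : ℝ => |y| ^ q) 0 y = |y| ^ q / y := by
        rw [slope_def_field, abs_zero, Real.zero_rpow (by linarith : q ≠ 0), sub_zero, sub_zero]
      rw [h5]
      have h6 : ‖|y| ^ q / y‖ = |y| ^ q / |y| := by
        rw [Real.norm_eq_abs, abs_div, abs_of_nonneg (Real.rpow_nonneg (abs_nonneg y) q)]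
      rw [h6, ← Real.rpow_sub_one (abs_ne_zero.2 hy') q]
    have h2 : Tendsto (fun y : ℝ => |y| ^ (q - 1)) (𝓝[≠] (0:ℝ)) (𝓝 0) := by
      have hc : Continuous (fun y : ℝ => |y| ^ (q - 1)) := auxContAbsRpow (by linarith)
      have := hc.continuousAt (x := (0:ℝ))
      have h0 : |(0:ℝ)| ^ (q - 1) = 0 := by
        rw [abs_zero, Real.zero_rpow (by linarith : q - 1 ≠ 0)]
      rw [ContinuousAt, h0] at this
      exact this.mono_left nhdsWithin_le_nhds
    exact squeeze_zero_norm' h1 h2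
  · have hev : (fun y : ℝ => |y| ^ q) =ᶠ[nhds x] (fun y : ℝ => y ^ q) := by
      filter_upwards [eventually_gt_nhds hx] with y hy
      rw [abs_of_pos hy]
    have hbase : HasDerivAt (fun t : ℝ => t ^ q) (q * x ^ (q - 1)) x :=
      Real.hasDerivAt_rpow_const (Or.inl (by linarith))
    have hval : q * x ^ (q - 1) = q * |x| ^ (q - 2) * x := by
      rw [abs_of_pos hx, show q - 1 = (q - 2) + 1 by ring,
        Real.rpow_add_one (by linarith : x ≠ 0)]
      ring
    exact hval ▸ (hbase.congr_of_eventuallyEq hev)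

-- |w u| = |v'|^(p-1) and A_eq
lemma auxAeq {p : ℝ} (hp : 1 < p) (y : ℝ) :
    (p-1)/p * (|(|y| ^ (p-2) * y)| ^ (p/(p-1))) = (p-1)/p * |y| ^ p := by
  rcases eq_or_ne y 0 with rfl | hy
  · have hq0 : p / (p-1) ≠ 0 := by
      exact div_ne_zero (by linarith) (by linarith)
    simp [Real.zero_rpow hq0, Real.zero_rpow (by linarith : p ≠ 0)]
  · have hy' : (0:ℝ) < |y| := abs_pos.2 hy
    have habs : |(|y| ^ (p-2) * y)| = |y| ^ (p - 1) := by
      rw [abs_mul, abs_of_nonneg (Real.rpow_nonneg (abs_nonneg y) _),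
        show p - 1 = (p-2) + 1 by ring, Real.rpow_add_one (ne_of_gt hy')]
    rw [habs, ← Real.rpow_mul (le_of_lt hy')]
    congr 2
    field_simp
    rw [div_self (by linarith : p - 1 ≠ 0)]
lemma auxAderiv {p : ℝ} (hp : 1 < p) {v' : ℝ → ℝ} {τ W : ℝ}
    (hw : HasDerivAt (fun s => |v' s| ^ (p - 2) * v' s) W τ) :
    HasDerivAt (fun u => (p-1)/p * |v' u| ^ p) (v' τ * W) τ := by
  set q := p / (p - 1) with hqdef
  have hp1 : (0:ℝ) < p - 1 := by linarith
  have hq : 1 < q := by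
    rw [hqdef, lt_div_iff₀ hp1]; linarith
  have hcomp := ((auxAbsRpowDeriv hq (|v' τ| ^ (p-2) * v' τ)).comp τ hw).const_mul ((p-1)/p)
  have hfun : (fun u => (p-1)/p * ((fun y : ℝ => |y| ^ q) ∘ (fun s => |v' s| ^ (p - 2) * v' s)) u)
      = (fun u => (p-1)/p * |v' u| ^ p) := by
    funext u; exact auxAeq hp (v' u)
  rw [hfun] at hcomp
  refine hcomp.congr_deriv (Eq.symm ?_)
  -- value equality
  rcases eq_or_ne (v' τ) 0 with h0 | h0
  · simp [h0]
  · have hy' : (0:ℝ) < |v' τ| := abs_pos.2 h0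
    have habs : |(|v' τ| ^ (p-2) * v' τ)| = |v' τ| ^ (p - 1) := by
      rw [abs_mul, abs_of_nonneg (Real.rpow_nonneg (abs_nonneg _) _),
        show p - 1 = (p-2) + 1 by ring, Real.rpow_add_one (ne_of_gt hy')]
    rw [habs, ← Real.rpow_mul (le_of_lt hy')]
    have he : (p - 1) * (q - 2) = 2 - p := by
      rw [hqdef]; field_simp; ring
    rw [he]
    have : |v' τ| ^ (2 - p) * (|v' τ| ^ (p-2) * v' τ) = v' τ := by
      rw [← mul_assoc, ← Real.rpow_add hy']
      norm_num
    have hcq : (p-1)/p * q = 1 := by rw [hqdef]; field_simp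
    calc v' τ * W = ((p-1)/p * q) * (|v' τ| ^ (2-p) * (|v' τ| ^ (p-2) * v' τ)) * W := by
          rw [hcq, this]; ring
      _ = (p-1)/p * (q * |v' τ| ^ (2-p) * (|v' τ| ^ (p-2) * v' τ) * W) := by ring

lemma auxLittleO {C : ℝ → ℝ} {τ ε : ℝ} (hC : HasDerivAt C 0 τ) (hε : 0 < ε) :
    ∃ δ > 0, ∀ u : ℝ, |u - τ| < δ → C τ - ε * |u - τ| ≤ C u := by
  have h1 := hasDerivAt_iff_isLittleO.mp hC
  simp only [smul_zero, sub_zero] at h1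
  have h2 := h1.def hε
  rw [Metric.eventually_nhds_iff] at h2
  obtain ⟨δ, hδ, hh⟩ := h2
  refine ⟨δ, hδ, fun u hu => ?_⟩
  have := hh (show dist u τ < δ by rwa [Real.dist_eq])
  simp only [Real.norm_eq_abs] at this
  have h3 := (abs_le.mp this).1
  have h4 : -(ε * |u - τ|) ≤ C u - C τ := by linarith
  linarith

theorem auxKL (p z : ℝ) (h f F v v' : ℝ → ℝ)
    (hp : 1 < p)
    (hhpos : ∀ t ∈ Set.Ioc (0 : ℝ) z, 0 < h t)
    (hhdec : AntitoneOn h (Set.Ioc (0 : ℝ) z))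
    (hF : ∀ x : ℝ, x ≠ 0 → HasDerivAt F (f x) x)
    (hFcont : Continuous F)
    (hv : ∀ t ∈ Set.Icc (0 : ℝ) z, HasDerivAt v (v' t) t)
    (hv'cont : ContinuousOn v' (Set.Icc 0 z))
    (hode : ∀ t ∈ Set.Ioo (0 : ℝ) z, v t ≠ 0 →
      HasDerivAt (fun s => |v' s| ^ (p - 2) * v' s) (-(h t * f (v t))) t)
    (t s m ε : ℝ) (ht : 0 < t) (hts : t ≤ s) (hsz : s < z) (hm : 0 ≤ m)
    (hAm : ∀ u ∈ Set.Icc t s, m ≤ (p-1)/p * |v' u| ^ p)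
    (hvne : ∀ u ∈ Set.Icc t s, v u ≠ 0) (hε : 0 < ε) :
    (p-1)/p * |v' t| ^ p * (h t)⁻¹ + F (v t) + m * ((h s)⁻¹ - (h t)⁻¹) - ε * (s - t)
      ≤ (p-1)/p * |v' s| ^ p * (h s)⁻¹ + F (v s) := by
  have hppos : (0:ℝ) < p := by linarith
  have hc : (0:ℝ) < (p-1)/p := div_pos (by linarith) hppos
  set A : ℝ → ℝ := fun u => (p-1)/p * |v' u| ^ p with hAdef
  set B : ℝ → ℝ := fun u => F (v u) with hBdef
  set E : ℝ → ℝ := fun u => A u * (h u)⁻¹ + B u with hEdef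
  have hAnn : ∀ u, 0 ≤ A u := fun u =>
    mul_nonneg (le_of_lt hc) (Real.rpow_nonneg (abs_nonneg _) p)
  have hAcont : ContinuousOn A (Set.Icc 0 z) := by
    exact continuousOn_const.mul ((auxContAbsRpow (le_of_lt hppos)).comp_continuousOn hv'cont)
  have hBcont : ContinuousOn B (Set.Icc 0 z) :=
    hFcont.comp_continuousOn (fun u hu => (hv u hu).continuousAt.continuousWithinAt)
  have hhpos' : ∀ {u}, 0 < u → u ≤ z → 0 < h u := fun hu huz => hhpos _ ⟨hu, huz⟩
  have hk : ∀ {u1 u2 : ℝ}, 0 < u1 → u1 ≤ u2 → u2 ≤ z → (h u1)⁻¹ ≤ (h u2)⁻¹ := by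
    intro u1 u2 h1 h12 h2z
    have p2 := hhpos' (lt_of_lt_of_le h1 h12) h2z
    have hle : h u2 ≤ h u1 := hhdec ⟨h1, le_trans h12 h2z⟩ ⟨lt_of_lt_of_le h1 h12, h2z⟩ h12
    exact inv_anti₀ p2 hle
  set S : Set ℝ := {u | u ∈ Set.Icc t s ∧
      E t + m * ((h u)⁻¹ - (h t)⁻¹) - ε * (u - t) ≤ E u} with hSdef
  have htS : t ∈ S := ⟨⟨le_refl t, hts⟩, by simp⟩
  have hbdd : BddAbove S := ⟨s, fun u hu => hu.1.2⟩
  have hne : S.Nonempty := ⟨t, htS⟩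
  set T := sSup S with hTdef
  have htT : t ≤ T := le_csSup hbdd htS
  have hTs : T ≤ s := csSup_le hne (fun u hu => hu.1.2)
  have hT0 : 0 < T := lt_of_lt_of_le ht htT
  have hTz : T < z := lt_of_le_of_lt hTs hsz
  have hTIcc : T ∈ Set.Icc (0:ℝ) z := ⟨le_of_lt hT0, le_of_lt hTz⟩
  have hkT : 0 < (h T)⁻¹ := inv_pos.2 (hhpos' hT0 (le_of_lt hTz))
  have hTmem : T ∈ Set.Icc t s := ⟨htT, hTs⟩
  -- closedness : T ∈ S
  have hTinS : T ∈ S := by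
    by_cases hTS : T ∈ S
    · exact hTS
    have httT : t < T := by
      rcases lt_or_eq_of_le htT with hlt | heq
      · exact hlt
      · exact absurd (heq ▸ htS) hTS
    refine ⟨hTmem, ?_⟩
    apply le_of_forall_sub_le
    intro η hη
    have h1kT : (0:ℝ) < 1 + (h T)⁻¹ := by linarith
    set η₁ := η / (1 + (h T)⁻¹) with hη₁def
    have hη₁ : 0 < η₁ := div_pos hη h1kT
    obtain ⟨δa, hδa, hha⟩ := Metric.continuousWithinAt_iff.mp (hAcont T hTIcc) η₁ hη₁
    obtain ⟨δb, hδb, hhb⟩ := Metric.continuousWithinAt_iff.mp (hBcont T hTIcc) η₁ hη₁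
    set δc := min δa δb with hδcdef
    have hδc : 0 < δc := lt_min hδa hδb
    obtain ⟨u, huS, hub⟩ := exists_lt_of_lt_csSup hne
      (show max t (T - δc) < sSup S by
        rw [← hTdef]
        rcases max_cases t (T - δc) with ⟨hm1, _⟩ | ⟨hm1, _⟩ <;> rw [hm1] <;> [exact httT; linarith])
    have hut : t ≤ u := le_trans (le_max_left _ _) (le_of_lt hub)
    have huT : u ≤ T := le_csSup hbdd huS
    have huT' : u < T := lt_of_le_of_ne huT (fun hh => hTS (hh ▸ huS))
    have hdistu : dist u T < δc := by
      rw [Real.dist_eq, abs_of_nonpos (by linarith)]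
      have := lt_of_le_of_lt (le_max_right t (T - δc)) hub
      linarith
    have hu0 : 0 < u := lt_of_lt_of_le ht hut
    have huz : u ≤ z := le_trans huT (le_of_lt hTz)
    have huIcc : u ∈ Set.Icc (0:ℝ) z := ⟨le_of_lt hu0, huz⟩
    have hA' : dist (A u) (A T) < η₁ := hha huIcc (lt_of_lt_of_le hdistu (min_le_left _ _))
    have hB' : dist (B u) (B T) < η₁ := hhb huIcc (lt_of_lt_of_le hdistu (min_le_right _ _))
    rw [Real.dist_eq] at hA' hB'
    have hAu : A T ≥ A u - η₁ := by have := (abs_le.mp (le_of_lt hA')).2; linarith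
    have hBu : B T ≥ B u - η₁ := by have := (abs_le.mp (le_of_lt hB')).2; linarith
    have hku : (h u)⁻¹ ≤ (h T)⁻¹ := hk hu0 huT (le_of_lt hTz)
    have hkunn : 0 < (h u)⁻¹ := inv_pos.2 (hhpos' hu0 huz)
    have hmAT : m ≤ A T := hAm T hTmem
    have huSineq := huS.2
    -- assemble
    have e1 : A T * (h T)⁻¹ ≥ A T * (h u)⁻¹ + m * ((h T)⁻¹ - (h u)⁻¹) := by
      nlinarith [mul_nonneg (sub_nonneg.2 (hAm T hTmem)) (sub_nonneg.2 hku)]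
    have e2 : A T * (h u)⁻¹ ≥ A u * (h u)⁻¹ - η₁ * (h T)⁻¹ := by
      nlinarith [mul_nonneg (sub_nonneg.2 (show A u - η₁ ≤ A T by linarith)) (le_of_lt hkunn),
        mul_le_mul_of_nonneg_left hku (le_of_lt hη₁)]
    have e3 : η₁ * (1 + (h T)⁻¹) = η := by
      rw [hη₁def, div_mul_cancel₀ _ (ne_of_gt h1kT)]
    have eut : ε * (u - t) ≤ ε * (T - t) := by
      exact mul_le_mul_of_nonneg_left (by linarith) (le_of_lt hε)
    have hET : E T = A T * (h T)⁻¹ + B T := rfl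
    have hEu : E u = A u * (h u)⁻¹ + B u := rfl
    rw [hET]
    rw [hEu] at huSineq
    linarith [huSineq, e1, e2, e3, hBu, eut]
  -- openness : T = s
  have hTeq : T = s := by
    by_contra hTne
    have hTs' : T < s := lt_of_le_of_ne hTs hTne
    have hvT : v T ≠ 0 := hvne T hTmem
    have hodeT := hode T ⟨hT0, hTz⟩ hvT
    have hAd : HasDerivAt A (v' T * (-(h T * f (v T)))) T := auxAderiv hp hodeT
    have hBd : HasDerivAt B (f (v T) * v' T) T :=
      (hF (v T) hvT).comp T (hv T hTIcc)
    have hCd : HasDerivAt (fun u => A u * (h T)⁻¹ + B u)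
        (v' T * (-(h T * f (v T))) * (h T)⁻¹ + f (v T) * v' T) T :=
      (hAd.mul_const _).add hBd
    have hhT : h T ≠ 0 := ne_of_gt (hhpos' hT0 (le_of_lt hTz))
    have hval : v' T * (-(h T * f (v T))) * (h T)⁻¹ + f (v T) * v' T = 0 := by
      field_simp
      ring
    rw [hval] at hCd
    obtain ⟨δ₃, hδ₃, hCineq⟩ := auxLittleO hCd hε
    set u' := min (T + δ₃/2) s with hu'def
    have hu'T : T < u' := lt_min (by linarith) hTs'
    have hu's : u' ≤ s := min_le_right _ _
    have hu'dist : |u' - T| < δ₃ := by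
      rw [abs_of_pos (by linarith)]
      have : u' ≤ T + δ₃/2 := min_le_left _ _
      linarith
    have hu'mem : u' ∈ Set.Icc t s := ⟨le_trans htT (le_of_lt hu'T), hu's⟩
    have hu'0 : 0 < u' := lt_trans hT0 hu'T
    have hu'z : u' ≤ z := le_of_lt (lt_of_le_of_lt hu's hsz)
    have hku' : (h T)⁻¹ ≤ (h u')⁻¹ := hk hT0 (le_of_lt hu'T) hu'z
    have hmAu' : m ≤ A u' := hAm u' hu'mem
    have hCu' := hCineq u' hu'dist
    have habs : |u' - T| = u' - T := abs_of_pos (by linarith)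
    rw [habs] at hCu'
    have hu'S : u' ∈ S := by
      refine ⟨hu'mem, ?_⟩
      have hTineq := hTinS.2
      have e1 : A u' * (h u')⁻¹ ≥ A u' * (h T)⁻¹ + m * ((h u')⁻¹ - (h T)⁻¹) := by
        nlinarith [mul_nonneg (sub_nonneg.2 hmAu') (sub_nonneg.2 hku')]
      have hET : E T = A T * (h T)⁻¹ + B T := rfl
      have hEu' : E u' = A u' * (h u')⁻¹ + B u' := rfl
      rw [hEu']
      rw [hET] at hTineq
      linarith [hCu', e1, hTineq]
    have := le_csSup hbdd hu'S
    rw [← hTdef] at this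
    linarith
  rw [hTeq] at hTinS
  exact hTinS.2

lemma auxL1 (p z : ℝ) (h F v v' : ℝ → ℝ) (hp : 1 < p)
    (hhpos : ∀ t ∈ Set.Ioc (0 : ℝ) z, 0 < h t)
    (hhdec : AntitoneOn h (Set.Ioc (0 : ℝ) z))
    (hFcont : Continuous F)
    (hv : ∀ t ∈ Set.Icc (0 : ℝ) z, HasDerivAt v (v' t) t)
    (hv'cont : ContinuousOn v' (Set.Icc 0 z))
    (s η : ℝ) (hs0 : 0 < s) (hsz : s < z) (hη : 0 < η) :
    ∃ δ > 0, ∀ u : ℝ, s < u → u ≤ z → u - s < δ →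
      (p-1)/p * |v' s| ^ p * (h s)⁻¹ + F (v s) - η
        ≤ (p-1)/p * |v' u| ^ p * (h u)⁻¹ + F (v u) := by
  have hppos : (0:ℝ) < p := by linarith
  set A : ℝ → ℝ := fun u => (p-1)/p * |v' u| ^ p with hAdef
  set B : ℝ → ℝ := fun u => F (v u) with hBdef
  have hAnn : ∀ u, 0 ≤ A u := fun u =>
    mul_nonneg (le_of_lt (div_pos (by linarith) hppos)) (Real.rpow_nonneg (abs_nonneg _) p)
  have hAcont : ContinuousOn A (Set.Icc 0 z) :=
    continuousOn_const.mul ((auxContAbsRpow (le_of_lt hppos)).comp_continuousOn hv'cont)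
  have hBcont : ContinuousOn B (Set.Icc 0 z) :=
    hFcont.comp_continuousOn (fun u hu => (hv u hu).continuousAt.continuousWithinAt)
  have hsIcc : s ∈ Set.Icc (0:ℝ) z := ⟨le_of_lt hs0, le_of_lt hsz⟩
  have hks : 0 < (h s)⁻¹ := inv_pos.2 (hhpos s ⟨hs0, le_of_lt hsz⟩)
  have h1ks : (0:ℝ) < 1 + (h s)⁻¹ := by linarith
  set η₁ := η / (1 + (h s)⁻¹) with hη₁def
  have hη₁ : 0 < η₁ := div_pos hη h1ks
  obtain ⟨δa, hδa, hha⟩ := Metric.continuousWithinAt_iff.mp (hAcont s hsIcc) η₁ hη₁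
  obtain ⟨δb, hδb, hhb⟩ := Metric.continuousWithinAt_iff.mp (hBcont s hsIcc) η₁ hη₁
  refine ⟨min δa δb, lt_min hδa hδb, fun u hsu huz hud => ?_⟩
  have huIcc : u ∈ Set.Icc (0:ℝ) z := ⟨le_of_lt (lt_trans hs0 hsu), huz⟩
  have hdu : dist u s < min δa δb := by rw [Real.dist_eq, abs_of_pos (by linarith)]; exact hud
  have hA' := hha huIcc (lt_of_lt_of_le hdu (min_le_left _ _))
  have hB' := hhb huIcc (lt_of_lt_of_le hdu (min_le_right _ _))
  rw [Real.dist_eq] at hA' hB'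
  have hAu : A s - η₁ ≤ A u := by have := (abs_le.mp (le_of_lt hA')).1; linarith
  have hBu : B s - η₁ ≤ B u := by have := (abs_le.mp (le_of_lt hB')).1; linarith
  have hku : (h s)⁻¹ ≤ (h u)⁻¹ := by
    have pu := hhpos u ⟨lt_trans hs0 hsu, huz⟩
    exact inv_anti₀ pu (hhdec ⟨hs0, le_of_lt hsz⟩ ⟨lt_trans hs0 hsu, huz⟩ (le_of_lt hsu))
  have e0 : A u * (h s)⁻¹ ≤ A u * (h u)⁻¹ := mul_le_mul_of_nonneg_left hku (hAnn u)
  have e1 : (A s - η₁) * (h s)⁻¹ ≤ A u * (h s)⁻¹ :=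
    mul_le_mul_of_nonneg_right hAu (le_of_lt hks)
  have e3 : η₁ * (1 + (h s)⁻¹) = η := by
    rw [hη₁def, div_mul_cancel₀ _ (ne_of_gt h1ks)]
  have goal : A s * (h s)⁻¹ + B s - η ≤ A u * (h u)⁻¹ + B u := by nlinarith [e0, e1, hBu, e3]
  exact goal

lemma auxL2 (p z : ℝ) (h F v v' : ℝ → ℝ) (hp : 1 < p)
    (hhpos : ∀ t ∈ Set.Ioc (0 : ℝ) z, 0 < h t)
    (hhdec : AntitoneOn h (Set.Ioc (0 : ℝ) z))
    (hFcont : Continuous F)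
    (hv : ∀ t ∈ Set.Icc (0 : ℝ) z, HasDerivAt v (v' t) t)
    (hv'cont : ContinuousOn v' (Set.Icc 0 z))
    (s η m : ℝ) (hs0 : 0 < s) (hsz : s ≤ z) (hη : 0 < η) (hm0 : 0 ≤ m)
    (hmA : m ≤ (p-1)/p * |v' s| ^ p) :
    ∃ δ > 0, ∀ u : ℝ, 0 < u → u < s → s - u < δ →
      (p-1)/p * |v' u| ^ p * (h u)⁻¹ + F (v u) + m * ((h s)⁻¹ - (h u)⁻¹) - η
        ≤ (p-1)/p * |v' s| ^ p * (h s)⁻¹ + F (v s) := by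
  have hppos : (0:ℝ) < p := by linarith
  set A : ℝ → ℝ := fun u => (p-1)/p * |v' u| ^ p with hAdef
  set B : ℝ → ℝ := fun u => F (v u) with hBdef
  have hAnn : ∀ u, 0 ≤ A u := fun u =>
    mul_nonneg (le_of_lt (div_pos (by linarith) hppos)) (Real.rpow_nonneg (abs_nonneg _) p)
  have hAcont : ContinuousOn A (Set.Icc 0 z) :=
    continuousOn_const.mul ((auxContAbsRpow (le_of_lt hppos)).comp_continuousOn hv'cont)
  have hBcont : ContinuousOn B (Set.Icc 0 z) :=
    hFcont.comp_continuousOn (fun u hu => (hv u hu).continuousAt.continuousWithinAt)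
  have hsIcc : s ∈ Set.Icc (0:ℝ) z := ⟨le_of_lt hs0, hsz⟩
  have hks : 0 < (h s)⁻¹ := inv_pos.2 (hhpos s ⟨hs0, hsz⟩)
  have h1ks : (0:ℝ) < 1 + (h s)⁻¹ := by linarith
  set η₁ := η / (1 + (h s)⁻¹) with hη₁def
  have hη₁ : 0 < η₁ := div_pos hη h1ks
  obtain ⟨δa, hδa, hha⟩ := Metric.continuousWithinAt_iff.mp (hAcont s hsIcc) η₁ hη₁
  obtain ⟨δb, hδb, hhb⟩ := Metric.continuousWithinAt_iff.mp (hBcont s hsIcc) η₁ hη₁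
  refine ⟨min δa δb, lt_min hδa hδb, fun u hu0 hus hud => ?_⟩
  have huIcc : u ∈ Set.Icc (0:ℝ) z := ⟨le_of_lt hu0, le_trans (le_of_lt hus) hsz⟩
  have hdu : dist u s < min δa δb := by
    rw [Real.dist_eq, abs_of_neg (by linarith)]; linarith
  have hA' := hha huIcc (lt_of_lt_of_le hdu (min_le_left _ _))
  have hB' := hhb huIcc (lt_of_lt_of_le hdu (min_le_right _ _))
  rw [Real.dist_eq] at hA' hB'
  have hAu : A u - η₁ ≤ A s := by have := (abs_le.mp (le_of_lt hA')).2; linarith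
  have hBu : B u - η₁ ≤ B s := by have := (abs_le.mp (le_of_lt hB')).2; linarith
  have hku : (h u)⁻¹ ≤ (h s)⁻¹ := by
    have ps := hhpos s ⟨hs0, hsz⟩
    exact inv_anti₀ ps (hhdec ⟨hu0, le_trans (le_of_lt hus) hsz⟩ ⟨hs0, hsz⟩ (le_of_lt hus))
  have hkunn : 0 < (h u)⁻¹ := inv_pos.2 (hhpos u ⟨hu0, le_trans (le_of_lt hus) hsz⟩)
  have hmA' : m ≤ A s := hmA
  have e1 : A s * (h u)⁻¹ + m * ((h s)⁻¹ - (h u)⁻¹) ≤ A s * (h s)⁻¹ := by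
    nlinarith [mul_nonneg (sub_nonneg.2 hmA') (sub_nonneg.2 hku)]
  have e2 : A u * (h u)⁻¹ - η₁ * (h s)⁻¹ ≤ A s * (h u)⁻¹ := by
    nlinarith [mul_nonneg (sub_nonneg.2 (show A u - η₁ ≤ A s from hAu)) (le_of_lt hkunn),
      mul_le_mul_of_nonneg_left hku (le_of_lt hη₁)]
  have e3 : η₁ * (1 + (h s)⁻¹) = η := by
    rw [hη₁def, div_mul_cancel₀ _ (ne_of_gt h1ks)]
  have goal : A u * (h u)⁻¹ + B u + m * ((h s)⁻¹ - (h u)⁻¹) - η ≤ A s * (h s)⁻¹ + B s := by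
    linarith [e1, e2, e3, hBu]
  exact goal

lemma auxDivHalf (x b : ℝ) (hb : b ≠ 0) : x / (2*b) * b = x/2 := by
  field_simp

lemma auxMain (p a z : ℝ) (h f F v v' : ℝ → ℝ)
    (hp : 1 < p) (ha : 0 < a) (hz : 0 < z)
    (hhpos : ∀ t ∈ Set.Ioc (0 : ℝ) z, 0 < h t)
    (hhdec : AntitoneOn h (Set.Ioc (0 : ℝ) z))
    (hF : ∀ x : ℝ, x ≠ 0 → HasDerivAt F (f x) x)
    (hFcont : Continuous F) (hF0 : F 0 = 0)
    (hv : ∀ t ∈ Set.Icc (0 : ℝ) z, HasDerivAt v (v' t) t)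
    (hv'cont : ContinuousOn v' (Set.Icc 0 z))
    (hode : ∀ t ∈ Set.Ioo (0 : ℝ) z, v t ≠ 0 →
      HasDerivAt (fun s => |v' s| ^ (p - 2) * v' s) (-(h t * f (v t))) t)
    (hv0 : v 0 = 0) (hv'0 : v' 0 = a)
    (hvz : v z = 0) (hv'z : v' z = 0) : False := by
  have hppos : (0:ℝ) < p := by linarith
  have hc : (0:ℝ) < (p-1)/p := div_pos (by linarith) hppos
  obtain ⟨A, hAdef⟩ : ∃ g : ℝ → ℝ, g = fun u => (p-1)/p * |v' u| ^ p := ⟨_, rfl⟩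
  have hAu : ∀ u, A u = (p-1)/p * |v' u| ^ p := fun u => by rw [hAdef]
  obtain ⟨E, hEdef⟩ : ∃ g : ℝ → ℝ, g = fun u => (p-1)/p * |v' u| ^ p * (h u)⁻¹ + F (v u) :=
    ⟨_, rfl⟩
  have hEu : ∀ u, E u = (p-1)/p * |v' u| ^ p * (h u)⁻¹ + F (v u) := fun u => by rw [hEdef]
  have hEu2 : ∀ u, E u = A u * (h u)⁻¹ + F (v u) := fun u => by rw [hEu, hAu]
  have hAnn : ∀ u, 0 ≤ A u := fun u => by
    rw [hAu]
    exact mul_nonneg (le_of_lt hc) (Real.rpow_nonneg (abs_nonneg _) p)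
  have hhpos' : ∀ {u : ℝ}, 0 < u → u ≤ z → 0 < h u := fun hu huz => hhpos _ ⟨hu, huz⟩
  have hk : ∀ {u1 u2 : ℝ}, 0 < u1 → u1 ≤ u2 → u2 ≤ z → (h u1)⁻¹ ≤ (h u2)⁻¹ := by
    intro u1 u2 h1 h12 h2z
    exact inv_anti₀ (hhpos' (lt_of_lt_of_le h1 h12) h2z)
      (hhdec ⟨h1, le_trans h12 h2z⟩ ⟨lt_of_lt_of_le h1 h12, h2z⟩ h12)
  -- ### step 1 : near zero
  obtain ⟨δ₀, hδ₀, hδ₀p⟩ := Metric.continuousWithinAt_iff.mp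
    (hv'cont 0 ⟨le_refl 0, le_of_lt hz⟩) (a/2) (half_pos ha)
  set δ := min (δ₀/2) (z/2) with hδdef
  have hδpos : 0 < δ := lt_min (by linarith) (by linarith)
  have hδz : δ < z := lt_of_le_of_lt (min_le_right _ _) (by linarith)
  have hv'big : ∀ u ∈ Set.Icc (0:ℝ) δ, a/2 < v' u := by
    intro u hu
    have huz : u ∈ Set.Icc (0:ℝ) z := ⟨hu.1, le_trans hu.2 (le_of_lt hδz)⟩
    have hd : dist u 0 < δ₀ := by
      rw [Real.dist_eq, sub_zero, abs_of_nonneg hu.1]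
      have := le_trans hu.2 (min_le_left (δ₀/2) (z/2))
      linarith
    have := hδ₀p huz hd
    rw [Real.dist_eq, hv'0] at this
    have := (abs_lt.mp this).1
    linarith
  have hmono : StrictMonoOn v (Set.Icc 0 δ) := by
    apply strictMonoOn_of_deriv_pos (convex_Icc 0 δ)
    · exact fun u hu => (hv u ⟨hu.1, le_trans hu.2 (le_of_lt hδz)⟩).continuousAt.continuousWithinAt
    · intro x hx
      rw [interior_Icc] at hx
      rw [(hv x ⟨le_of_lt hx.1, le_trans (le_of_lt hx.2) (le_of_lt hδz)⟩).deriv]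
      have := hv'big x ⟨le_of_lt hx.1, le_of_lt hx.2⟩
      linarith
  have hvpos : ∀ u : ℝ, 0 < u → u ≤ δ → 0 < v u := by
    intro u h1 h2
    have := hmono ⟨le_refl 0, le_of_lt hδpos⟩ ⟨le_of_lt h1, h2⟩ h1
    rwa [hv0] at this
  obtain ⟨m, hmdef⟩ : ∃ x : ℝ, x = (p-1)/p * (a/2) ^ p := ⟨_, rfl⟩
  have hm : 0 < m := hmdef ▸ mul_pos hc (Real.rpow_pos_of_pos (half_pos ha) p)
  have hAm : ∀ u : ℝ, 0 ≤ u → u ≤ δ → m ≤ A u := by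
    intro u h1 h2
    rw [hAu, hmdef]
    have hva : a/2 ≤ |v' u| := le_trans (le_of_lt (hv'big u ⟨h1, h2⟩)) (le_abs_self _)
    exact mul_le_mul_of_nonneg_left
      (Real.rpow_le_rpow (le_of_lt (half_pos ha)) hva (le_of_lt hppos)) (le_of_lt hc)
  have hkδ : 0 < (h δ)⁻¹ := inv_pos.2 (hhpos' hδpos (le_of_lt hδz))
  -- E δ ≥ m * (h δ)⁻¹
  have hstep1 : m * (h δ)⁻¹ ≤ E δ := by
    apply le_of_forall_sub_le
    intro η hη
    have hFv : ContinuousAt (fun u => F (v u)) 0 :=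
      hFcont.continuousAt.comp (hv 0 ⟨le_refl 0, le_of_lt hz⟩).continuousAt
    obtain ⟨δF, hδF, hhF⟩ := Metric.continuousAt_iff.mp hFv (η/2) (half_pos hη)
    set t := min (δ/2) (δF/2) with htdef
    have ht0 : 0 < t := lt_min (by linarith) (by linarith)
    have htδ : t < δ := lt_of_le_of_lt (min_le_left _ _) (by linarith)
    have hBt : -(η/2) ≤ F (v t) := by
      have hd : dist t 0 < δF := by
        rw [Real.dist_eq, sub_zero, abs_of_pos ht0]
        have hh1 : t ≤ δF/2 := min_le_right _ _
        linarith
      have h1 := hhF hd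
      rw [Real.dist_eq] at h1
      have h0 : F (v 0) = 0 := by rw [hv0, hF0]
      rw [h0, sub_zero] at h1
      exact (abs_le.mp (le_of_lt h1)).1
    obtain ⟨ε0, hε0def⟩ : ∃ x : ℝ, x = η / (2*(δ - t)) := ⟨_, rfl⟩
    have hε0 : 0 < ε0 := hε0def ▸ div_pos hη (by linarith)
    have hKL := auxKL p z h f F v v' hp hhpos hhdec hF hFcont hv hv'cont hode
      t δ m ε0 ht0 (le_of_lt htδ) hδz (le_of_lt hm)
      (fun u hu => by rw [← hAu]; exact hAm u (le_trans (le_of_lt ht0) hu.1) hu.2)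
      (fun u hu => ne_of_gt (hvpos u (lt_of_lt_of_le ht0 hu.1) hu.2)) hε0
    have hKL' : A t * (h t)⁻¹ + F (v t) + m * ((h δ)⁻¹ - (h t)⁻¹) - ε0 * (δ - t) ≤ E δ := by
      rw [hEu, hAu]; exact hKL
    have hδt : δ - t ≠ 0 := ne_of_gt (by linarith)
    have hεeq : ε0 * (δ - t) = η/2 := by
      rw [hε0def]; exact auxDivHalf η (δ - t) hδt
    have hkt : 0 < (h t)⁻¹ := inv_pos.2 (hhpos' ht0 (le_trans (le_of_lt htδ) (le_of_lt hδz)))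
    have hAt : m * (h t)⁻¹ ≤ A t * (h t)⁻¹ :=
      mul_le_mul_of_nonneg_right (hAm t (le_of_lt ht0) (le_of_lt htδ)) (le_of_lt hkt)
    linarith
  obtain ⟨θ, hθdef⟩ : ∃ x : ℝ, x = m * (h δ)⁻¹ := ⟨_, rfl⟩
  have hθ : 0 < θ := hθdef ▸ mul_pos hm hkδ
  have hEz : E z = 0 := by
    rw [hEu, hv'z, hvz, hF0, abs_zero, Real.zero_rpow (ne_of_gt hppos), mul_zero, zero_mul,
      add_zero]
  obtain ⟨ε, hεdef⟩ : ∃ x : ℝ, x = θ / (2*(z - δ)) := ⟨_, rfl⟩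
  have hε : 0 < ε := hεdef ▸ div_pos hθ (by linarith)
  have hεzδ : ε * (z - δ) = θ/2 := by
    rw [hεdef]; exact auxDivHalf θ (z - δ) (ne_of_gt (by linarith))
  obtain ⟨S, hSdef⟩ : ∃ G : Set ℝ, G = {u | u ∈ Set.Icc δ z ∧ θ - ε * (u - δ) ≤ E u} := ⟨_, rfl⟩
  have hSmem : ∀ u, u ∈ S ↔ (u ∈ Set.Icc δ z ∧ θ - ε * (u - δ) ≤ E u) := fun u => by rw [hSdef]; rfl
  have hδS : δ ∈ S := (hSmem δ).2 ⟨⟨le_refl δ, le_of_lt hδz⟩,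
    by rw [sub_self, mul_zero, sub_zero, hθdef]; exact hstep1⟩
  have hbdd : BddAbove S := ⟨z, fun u hu => ((hSmem u).1 hu).1.2⟩
  have hne : S.Nonempty := ⟨δ, hδS⟩
  set T := sSup S with hTdef
  have hδT : δ ≤ T := le_csSup hbdd hδS
  have hTz' : T ≤ z := csSup_le hne (fun u hu => ((hSmem u).1 hu).1.2)
  have hT0 : 0 < T := lt_of_lt_of_le hδpos hδT
  -- closedness
  have hTinS : T ∈ S := by
    by_cases hTS : T ∈ S
    · exact hTS
    have hδT' : δ < T := lt_of_le_of_ne hδT (fun hh => hTS (hh ▸ hδS))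
    rw [hSmem]
    refine ⟨⟨hδT, hTz'⟩, ?_⟩
    apply le_of_forall_sub_le
    intro η hη
    obtain ⟨δa, hδa, hLa⟩ := auxL2 p z h F v v' hp hhpos hhdec hFcont hv hv'cont
      T η 0 hT0 hTz' hη (le_refl 0) (by rw [← hAu]; exact hAnn T)
    obtain ⟨u, huS, hub⟩ := exists_lt_of_lt_csSup hne
      (show max δ (T - δa) < sSup S by
        rw [← hTdef]
        rcases max_cases δ (T - δa) with ⟨hm1, _⟩ | ⟨hm1, _⟩ <;> rw [hm1] <;> [exact hδT'; linarith])
    have huT : u ≤ T := le_csSup hbdd huS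
    have huT' : u < T := lt_of_le_of_ne huT (fun hh => hTS (hh ▸ huS))
    have hu0 : 0 < u := lt_of_lt_of_le hδpos (le_trans (le_max_left _ _) (le_of_lt hub))
    have hud : T - u < δa := by
      have := lt_of_le_of_lt (le_max_right δ (T - δa)) hub
      linarith
    have hL := hLa u hu0 huT' hud
    have hL' : E u + 0 * ((h T)⁻¹ - (h u)⁻¹) - η ≤ E T := by rw [hEu u, hEu T]; exact hL
    have huineq : θ - ε * (u - δ) ≤ E u := ((hSmem u).1 huS).2
    have : ε * (u - δ) ≤ ε * (T - δ) := mul_le_mul_of_nonneg_left (by linarith) (le_of_lt hε)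
    linarith
  have hETlb : θ - ε * (T - δ) ≤ E T := ((hSmem T).1 hTinS).2
  have hεTδ : ε * (T - δ) ≤ θ/2 := by
    rw [← hεzδ]
    exact mul_le_mul_of_nonneg_left (by linarith) (le_of_lt hε)
  -- T = z
  have hTeq : T = z := by
    by_contra hne'
    have hTltz : T < z := lt_of_le_of_ne hTz' hne'
    have hTIcc : T ∈ Set.Icc (0:ℝ) z := ⟨le_of_lt hT0, hTz'⟩
    by_cases hvT : v T = 0
    · -- v T = 0 : v' T ≠ 0, v ≠ 0 just after T
      have hET' : A T * (h T)⁻¹ ≥ θ/2 := by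
        have h1 : E T = A T * (h T)⁻¹ := by rw [hEu2, hvT, hF0, add_zero]
        rw [h1] at hETlb; linarith
      have hAT : 0 < A T := by
        rcases eq_or_lt_of_le (hAnn T) with hh | hh
        · exfalso; rw [← hh, zero_mul] at hET'; linarith
        · exact hh
      have hv'T : v' T ≠ 0 := by
        intro h0
        have : A T = 0 := by
          rw [hAu, h0, abs_zero, Real.zero_rpow (ne_of_gt hppos), mul_zero]
        linarith
      have hslope := hasDerivAt_iff_tendsto_slope.mp (hv T hTIcc)
      have hev : ∀ᶠ u in 𝓝[≠] T, slope v T u ≠ 0 := hslope.eventually_ne hv'T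
      rw [eventually_nhdsWithin_iff, Metric.eventually_nhds_iff] at hev
      obtain ⟨δ₂, hδ₂, hh₂⟩ := hev
      have hvne2 : ∀ u : ℝ, u ≠ T → |u - T| < δ₂ → v u ≠ 0 := by
        intro u hune hud hvu
        have := hh₂ (show dist u T < δ₂ by rwa [Real.dist_eq]) hune
        apply this
        rw [slope_def_field, hvu, hvT]
        simp
      set u' := min (T + δ₂/2) z with hu'def
      have hu'T : T < u' := lt_min (by linarith) hTltz
      have hu'z : u' ≤ z := min_le_right _ _
      have hu'd : u' ≤ T + δ₂/2 := min_le_left _ _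
      have hu'S : u' ∈ S := by
        rw [hSmem]
        refine ⟨⟨le_trans hδT (le_of_lt hu'T), hu'z⟩, ?_⟩
        apply le_of_forall_sub_le
        intro η hη
        have hu'0 : 0 < u' := lt_trans hT0 hu'T
        obtain ⟨δa, hδa, hLa⟩ := auxL2 p z h F v v' hp hhpos hhdec hFcont hv hv'cont
          u' (η/2) 0 hu'0 hu'z (half_pos hη) (le_refl 0) (by rw [← hAu]; exact hAnn u')
        obtain ⟨δb, hδb, hLb⟩ := auxL1 p z h F v v' hp hhpos hhdec hFcont hv hv'cont
          T (η/2) hT0 hTltz (half_pos hη)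
        set u'' := max (u' - δa/2) ((T + u')/2) with hu''def
        have hu''1 : u'' < u' := max_lt (by linarith) (by linarith)
        have hu''2 : T < u'' := lt_of_lt_of_le (by linarith) (le_max_right _ _)
        have hu''3 : u' - u'' < δa := by
          have hh2 : u' - δa/2 ≤ u'' := le_max_left _ _
          linarith
        set t' := min (T + δb/2) u'' with ht'def
        have ht'1 : T < t' := lt_min (by linarith) hu''2
        have ht'2 : t' ≤ u'' := min_le_right _ _
        have ht'3 : t' - T < δb := by
          have hh3 : t' ≤ T + δb/2 := min_le_left _ _
          linarith
        have hu''z : u'' < z := lt_of_lt_of_le hu''1 hu'z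
        have hKL := auxKL p z h f F v v' hp hhpos hhdec hF hFcont hv hv'cont hode
          t' u'' 0 ε (lt_trans hT0 ht'1) ht'2 hu''z (le_refl 0)
          (fun w hw => by rw [← hAu]; exact hAnn w)
          (fun w hw => hvne2 w (ne_of_gt (lt_of_lt_of_le ht'1 hw.1))
            (by
              rw [abs_of_pos (by linarith [lt_of_lt_of_le ht'1 hw.1] : (0:ℝ) < w - T)]
              have h1 : w ≤ u'' := hw.2
              linarith)) hε
        have hKL' : E t' + 0 * ((h u'')⁻¹ - (h t')⁻¹) - ε * (u'' - t') ≤ E u'' := by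
          rw [hEu t', hEu u'']; exact hKL
        have hLb' : E T - η/2 ≤ E t' := by
          rw [hEu T, hEu t']
          exact hLb t' ht'1 (le_of_lt (lt_of_le_of_lt ht'2 hu''z)) ht'3
        have hLa' : E u'' + 0 * ((h u')⁻¹ - (h u'')⁻¹) - η/2 ≤ E u' := by
          rw [hEu u'', hEu u']
          exact hLa u'' (lt_trans hT0 hu''2) hu''1 hu''3
        have h1 : T - δ + (u'' - t') ≤ u' - δ := by linarith
        have h2 : ε * (T - δ + (u'' - t')) ≤ ε * (u' - δ) :=
          mul_le_mul_of_nonneg_left h1 (le_of_lt hε)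
        linarith [hETlb, hLb', hKL', hLa', h2]
      have := le_csSup hbdd hu'S
      rw [← hTdef] at this
      linarith
    · -- v T ≠ 0 : differentiable point
      have hodeT := hode T ⟨hT0, hTltz⟩ hvT
      have hAd : HasDerivAt A (v' T * (-(h T * f (v T)))) T := by
        rw [hAdef]; exact auxAderiv hp hodeT
      have hBd : HasDerivAt (fun u => F (v u)) (f (v T) * v' T) T :=
        (hF (v T) hvT).comp T (hv T hTIcc)
      have hCd : HasDerivAt (fun u => A u * (h T)⁻¹ + F (v u))
          (v' T * (-(h T * f (v T))) * (h T)⁻¹ + f (v T) * v' T) T := (hAd.mul_const _).add hBd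
      have hhT : h T ≠ 0 := ne_of_gt (hhpos' hT0 hTz')
      have hval : v' T * (-(h T * f (v T))) * (h T)⁻¹ + f (v T) * v' T = 0 := by
        field_simp; ring
      rw [hval] at hCd
      obtain ⟨δ₃, hδ₃, hCineq⟩ := auxLittleO hCd hε
      set u' := min (T + δ₃/2) z with hu'def
      have hu'T : T < u' := lt_min (by linarith) hTltz
      have hu'z : u' ≤ z := min_le_right _ _
      have hu'dist : |u' - T| < δ₃ := by
        rw [abs_of_pos (by linarith)]
        have hh4 : u' ≤ T + δ₃/2 := min_le_left _ _
        linarith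
      have hCu' := hCineq u' hu'dist
      rw [abs_of_pos (by linarith)] at hCu'
      have hku' : (h T)⁻¹ ≤ (h u')⁻¹ := hk hT0 (le_of_lt hu'T) hu'z
      have e0 : A u' * (h T)⁻¹ ≤ A u' * (h u')⁻¹ := mul_le_mul_of_nonneg_left hku' (hAnn u')
      have hu'S : u' ∈ S := by
        rw [hSmem]
        refine ⟨⟨le_trans hδT (le_of_lt hu'T), hu'z⟩, ?_⟩
        have hET : E T = A T * (h T)⁻¹ + F (v T) := hEu2 T
        have hEu'e : E u' = A u' * (h u')⁻¹ + F (v u') := hEu2 u'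
        rw [hEu'e]
        rw [hET] at hETlb
        have : ε * (u' - δ) = ε * (T - δ) + ε * (u' - T) := by ring
        linarith [hCu', e0, hETlb]
      have := le_csSup hbdd hu'S
      rw [← hTdef] at this
      linarith
  rw [hTeq] at hTinS
  have hfin := ((hSmem z).1 hTinS).2
  rw [hEz] at hfin
  linarith

theorem stmt_11 (p a z : ℝ) (h f F v v' : ℝ → ℝ)
    (hp : 1 < p) (ha : 0 < a) (hz : 0 < z)
    (hhpos : ∀ t ∈ Set.Ioc (0 : ℝ) z, 0 < h t)
    (hhdec : AntitoneOn h (Set.Ioc (0 : ℝ) z))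
    (hF : ∀ x : ℝ, x ≠ 0 → HasDerivAt F (f x) x)
    (hFcont : Continuous F) (hF0 : F 0 = 0)
    (hv : ∀ t ∈ Set.Icc (0 : ℝ) z, HasDerivAt v (v' t) t)
    (hv'cont : ContinuousOn v' (Set.Icc 0 z))
    (hode : ∀ t ∈ Set.Ioo (0 : ℝ) z, v t ≠ 0 →
      HasDerivAt (fun s => |v' s| ^ (p - 2) * v' s) (-(h t * f (v t))) t)
    (hv0 : v 0 = 0) (hv'0 : v' 0 = a) :
    ((v z = 0 ∧ v' z = 0) → ∀ t ∈ Set.Icc (0 : ℝ) z, v t = 0) ∧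
      (v z = 0 → v' z ≠ 0) := by
  have key : ¬(v z = 0 ∧ v' z = 0) := by
    rintro ⟨h1, h2⟩
    exact auxMain p a z h f F v v' hp ha hz hhpos hhdec hF hFcont hF0 hv hv'cont hode
      hv0 hv'0 h1 h2
  exact ⟨fun hc => (key hc).elim, fun h1 h2 => key ⟨h1, h2⟩⟩
end

section
/- Let v : [t₀, T] → ℝ be C¹ and positive with v' > 0, satisfying the differential inequality ((v'/v)^(p-1))' ≤ -(p-1)(v'/v)^p on [t₀, T] where p > 1. Then v'(t)/v(t) ≤ 1/(t - t₀) for all t ∈ (t₀, T]. -/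
theorem stmt_13 (p t₀ T : ℝ) (v v' y' : ℝ → ℝ)
    (hp : 1 < p) (ht : t₀ < T)
    (hv : ∀ t ∈ Set.Icc t₀ T, HasDerivAt v (v' t) t)
    (hvpos : ∀ t ∈ Set.Icc t₀ T, 0 < v t)
    (hv'pos : ∀ t ∈ Set.Icc t₀ T, 0 < v' t)
    (hy : ∀ t ∈ Set.Icc t₀ T, HasDerivAt (fun s => (v' s / v s) ^ (p - 1)) (y' t) t)
    (hineq : ∀ t ∈ Set.Icc t₀ T, y' t ≤ -(p - 1) * (v' t / v t) ^ p) :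
    ∀ t ∈ Set.Ioc t₀ T, v' t / v t ≤ 1 / (t - t₀) := by
  have hp1 : (0:ℝ) < p - 1 := by linarith
  set e : ℝ := -(p-1)⁻¹ with he
  have hene : e < 0 := by
    simp only [he, neg_neg, Left.neg_neg_iff]
    positivity
  set x : ℝ → ℝ := fun t => v' t / v t with hx
  have hxpos : ∀ t ∈ Set.Icc t₀ T, 0 < x t := fun t htm =>
    div_pos (hv'pos t htm) (hvpos t htm)
  set y : ℝ → ℝ := fun t => x t ^ (p-1) with hydef
  have hypos : ∀ t ∈ Set.Icc t₀ T, 0 < y t := fun t htm =>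
    Real.rpow_pos_of_pos (hxpos t htm) _
  set w : ℝ → ℝ := fun t => y t ^ e with hwdef
  have hwx : ∀ t ∈ Set.Icc t₀ T, w t = (x t)⁻¹ := by
    intro t htm
    have := (hxpos t htm).le
    rw [hwdef, hydef]
    simp only
    rw [← Real.rpow_mul this]
    have : (p-1) * e = -1 := by
      rw [he]
      field_simp
    rw [this, Real.rpow_neg_one]
  have hwd : ∀ t ∈ Set.Icc t₀ T, HasDerivAt w (e * y t ^ (e-1) * y' t) t := by
    intro t htm
    have h := (hy t htm).rpow_const (p := e) (Or.inl (hypos t htm).ne')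
    convert h using 1
    ring
  -- derivative lower bound
  have key : ∀ t ∈ Set.Icc t₀ T, (1:ℝ) ≤ e * y t ^ (e-1) * y' t := by
    intro t htm
    have hyp := hypos t htm
    have hxp := hxpos t htm
    have hc : e * y t ^ (e-1) < 0 :=
      mul_neg_of_neg_of_pos hene (Real.rpow_pos_of_pos hyp _)
    have h1 : e * y t ^ (e-1) * y' t ≥ e * y t ^ (e-1) * (-(p-1) * x t ^ p) :=
      mul_le_mul_of_nonpos_left (hineq t htm) hc.le
    have h2 : e * y t ^ (e-1) * (-(p-1) * x t ^ p) = 1 := by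
      have hxle := hxp.le
      have hrw : y t ^ (e-1) = x t ^ ((p-1)*(e-1)) := by
        rw [hydef]; simp only
        rw [← Real.rpow_mul hxle]
      rw [hrw]
      have : x t ^ ((p-1)*(e-1)) * x t ^ p = x t ^ ((p-1)*(e-1) + p) := by
        rw [← Real.rpow_add hxp]
      have hexp : (p-1)*(e-1) + p = 0 := by
        rw [he]; field_simp; ring
      have hcoef : e * (-(p-1)) = 1 := by
        rw [he]; field_simp
      calc e * x t ^ ((p-1)*(e-1)) * (-(p-1) * x t ^ p)
          = (e * (-(p-1))) * (x t ^ ((p-1)*(e-1)) * x t ^ p) := by ring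
        _ = 1 * x t ^ ((p-1)*(e-1) + p) := by rw [hcoef, this]
        _ = 1 := by rw [hexp, Real.rpow_zero, one_mul]
    linarith
  -- w t - t is monotone on Icc
  set f : ℝ → ℝ := fun t => w t - t with hf
  have hfd : ∀ t ∈ Set.Icc t₀ T, HasDerivAt f (e * y t ^ (e-1) * y' t - 1) t := by
    intro t htm
    exact (hwd t htm).sub (hasDerivAt_id t)
  have hmono : MonotoneOn f (Set.Icc t₀ T) := by
    apply monotoneOn_of_deriv_nonneg (convex_Icc t₀ T)
    · exact fun t htm => ((hfd t htm).continuousAt).continuousWithinAt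
    · intro t htm
      rw [interior_Icc] at htm
      exact ((hfd t (Set.mem_Icc_of_Ioo htm)).differentiableAt).differentiableWithinAt
    · intro t htm
      rw [interior_Icc] at htm
      have htm' : t ∈ Set.Icc t₀ T := Set.mem_Icc_of_Ioo htm
      rw [(hfd t htm').deriv]
      linarith [key t htm']
  intro t htm
  obtain ⟨ht1, ht2⟩ := htm
  have htIcc : t ∈ Set.Icc t₀ T := ⟨ht1.le, ht2⟩
  have ht0Icc : t₀ ∈ Set.Icc t₀ T := ⟨le_refl _, ht.le⟩
  have hm := hmono ht0Icc htIcc ht1.le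
  have hw0 : 0 < w t₀ := Real.rpow_pos_of_pos (hypos t₀ ht0Icc) _
  have hwt : t - t₀ ≤ w t := by
    simp only [hf] at hm
    linarith
  have hpos : 0 < t - t₀ := by linarith
  have hwxt := hwx t htIcc
  have hxt : x t = (w t)⁻¹ := by
    rw [hwxt, inv_inv]
  calc v' t / v t = (w t)⁻¹ := hxt
    _ ≤ (t - t₀)⁻¹ := by
        apply inv_anti₀ hpos hwt
    _ = 1 / (t - t₀) := (one_div _).symm
end

section
/- Let p > 1, h > 0 decreasing, F continuous with F(0) = 0, and let v be C¹, positive and strictly decreasing on [M, T] with v'(M) = 0, satisfying ((p-1)/p)|v'|^p/h + F(v) ≥ F(v(M)) > F(v(t)) on (M, T). Then ∫_M^T h(t)^(1/p) dt ≤ ((p-1)/p)^(1/p) ∫_{v(T)}^{v(M)} dt / (F(v(M)) - F(t))^(1/p) ≤ ((p-1)/p)^(1/p) ∫_0^{v(M)} dt / (F(v(M)) - F(t))^(1/p). -/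
open Set MeasureTheory

theorem stmt_17 (p M T : ℝ) (h F v v' : ℝ → ℝ)
    (hp : 1 < p) (hMT : M < T)
    (hhpos : ∀ t ∈ Set.Icc M T, 0 < h t)
    (hhdec : AntitoneOn h (Set.Icc M T))
    (hFcont : Continuous F) (hF0 : F 0 = 0)
    (hv : ∀ t ∈ Set.Icc M T, HasDerivAt v (v' t) t)
    (hv'cont : ContinuousOn v' (Set.Icc M T))
    (hvpos : ∀ t ∈ Set.Icc M T, 0 < v t)
    (hvdec : StrictAntiOn v (Set.Icc M T))
    (hv'M : v' M = 0)
    (hFlt : ∀ t ∈ Set.Ico (0 : ℝ) (v M), F t < F (v M))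
    (hFint : IntervalIntegrable (fun t => 1 / (F (v M) - F t) ^ (1 / p))
      MeasureTheory.volume 0 (v M))
    (henergy : ∀ t ∈ Set.Icc M T,
      F (v M) ≤ (p - 1) / p * |v' t| ^ p / h t + F (v t)) :
    (∫ t in M..T, h t ^ (1 / p)) ≤
        ((p - 1) / p) ^ (1 / p) * ∫ t in (v T)..(v M), 1 / (F (v M) - F t) ^ (1 / p) ∧
      ((p - 1) / p) ^ (1 / p) * (∫ t in (v T)..(v M), 1 / (F (v M) - F t) ^ (1 / p)) ≤
        ((p - 1) / p) ^ (1 / p) * ∫ t in (0 : ℝ)..(v M), 1 / (F (v M) - F t) ^ (1 / p) := by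
  have hMTle : M ≤ T := hMT.le
  set C : ℝ := ((p - 1) / p) ^ (1 / p) with hC
  set g : ℝ → ℝ := fun u => 1 / (F (v M) - F u) ^ (1 / p) with hg
  have hp0 : (0:ℝ) < p := lt_trans one_pos hp
  have hppos : 0 < (p - 1) / p := div_pos (by linarith) hp0
  have hCpos : 0 < C := Real.rpow_pos_of_pos hppos _
  have hMem : M ∈ Icc M T := ⟨le_refl M, hMTle⟩
  have hTmem : T ∈ Icc M T := ⟨hMTle, le_refl T⟩
  have hvT : v T < v M := hvdec hMem hTmem hMT
  have hvT0 : 0 < v T := hvpos T hTmem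
  have hkey : ∀ t ∈ Ioo M T, 0 < F (v M) - F (v t) := by
    intro t ht
    have htI : t ∈ Icc M T := Ioo_subset_Icc_self ht
    have h1 : v t < v M := hvdec hMem htI ht.1
    have h2 : 0 < v t := hvpos t htI
    have := hFlt (v t) ⟨h2.le, h1⟩
    linarith
  -- pointwise inequality
  have hpt : ∀ t ∈ Ioo M T, h t ^ (1/p) ≤ C * (|v' t| • g (v t)) := by
    intro t ht
    have htI : t ∈ Icc M T := Ioo_subset_Icc_self ht
    have ha : 0 < h t := hhpos t htI
    have hb : 0 < F (v M) - F (v t) := hkey t ht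
    have hw : (0:ℝ) ≤ |v' t| := abs_nonneg _
    have he := henergy t htI
    have h1 : h t * (F (v M) - F (v t)) ≤ (p - 1)/p * |v' t| ^ p := by
      have h1' : F (v M) - F (v t) ≤ (p - 1)/p * |v' t| ^ p / h t := by linarith
      calc h t * (F (v M) - F (v t)) ≤ h t * ((p - 1)/p * |v' t| ^ p / h t) :=
            mul_le_mul_of_nonneg_left h1' ha.le
        _ = (p - 1)/p * |v' t| ^ p := by field_simp
    have h2 : (h t * (F (v M) - F (v t))) ^ (1/p) ≤ ((p-1)/p * |v' t| ^ p) ^ (1/p) :=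
      Real.rpow_le_rpow (by positivity) h1 (by positivity)
    rw [Real.mul_rpow ha.le hb.le,
        Real.mul_rpow hppos.le (Real.rpow_nonneg hw _),
        ← Real.rpow_mul hw, mul_one_div_cancel (ne_of_gt hp0), Real.rpow_one] at h2
    have hbp : 0 < (F (v M) - F (v t)) ^ (1/p) := Real.rpow_pos_of_pos hb _
    have h3 : h t ^ (1/p) ≤ C * |v' t| / (F (v M) - F (v t)) ^ (1/p) := by
      rw [le_div_iff₀ hbp]; exact h2
    calc h t ^ (1/p) ≤ C * |v' t| / (F (v M) - F (v t)) ^ (1/p) := h3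
      _ = C * (|v' t| • g (v t)) := by
          simp only [hg, smul_eq_mul]; ring
  have hvcont : ContinuousOn v (Icc M T) := fun t ht =>
    (hv t ht).continuousAt.continuousWithinAt
  have hinj : InjOn v (Ioo M T) := (hvdec.injOn).mono Ioo_subset_Icc_self
  have himg : v '' Ioo M T = Ioo (v T) (v M) := by
    apply Subset.antisymm
    · rintro _ ⟨t, ht, rfl⟩
      exact ⟨hvdec (Ioo_subset_Icc_self ht) hTmem ht.2, hvdec hMem (Ioo_subset_Icc_self ht) ht.1⟩
    · exact intermediate_value_Ioo' hMTle hvcont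
  have hder : ∀ t ∈ Ioo M T, HasDerivWithinAt v (v' t) (Ioo M T) t :=
    fun t ht => (hv t (Ioo_subset_Icc_self ht)).hasDerivWithinAt
  have hCOV : ∫ u in Ioo (v T) (v M), g u = ∫ t in Ioo M T, |v' t| • g (v t) := by
    rw [← himg]
    exact integral_image_eq_integral_abs_deriv_smul measurableSet_Ioo hder hinj g
  have hgint : IntegrableOn g (Ioo (v T) (v M)) volume :=
    hFint.1.mono_set (fun u hu => ⟨hvT0.trans hu.1, hu.2.le⟩)
  have hRint : IntegrableOn (fun t => |v' t| • g (v t)) (Ioo M T) volume := by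
    have := (integrableOn_image_iff_integrableOn_abs_deriv_smul measurableSet_Ioo hder hinj g).mp
    rw [himg] at this
    exact this hgint
  have hLanti : AntitoneOn (fun t => h t ^ (1/p)) (Icc M T) := by
    intro a haI b hbI hab
    exact Real.rpow_le_rpow (hhpos b hbI).le (hhdec haI hbI hab) (by positivity)
  have hLint : IntegrableOn (fun t => h t ^ (1/p)) (Ioo M T) volume :=
    (AntitoneOn.integrableOn_isCompact isCompact_Icc hLanti).mono_set Ioo_subset_Icc_self
  have hmono : ∫ t in Ioo M T, h t ^ (1/p) ≤ ∫ t in Ioo M T, C * (|v' t| • g (v t)) :=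
    setIntegral_mono_on hLint (hRint.const_mul C) measurableSet_Ioo hpt
  have e1 : (∫ t in M..T, h t ^ (1/p)) = ∫ t in Ioo M T, h t ^ (1/p) := by
    rw [intervalIntegral.integral_of_le hMTle, integral_Ioc_eq_integral_Ioo]
  have e2 : ∫ t in Ioo M T, C * (|v' t| • g (v t)) = C * ∫ u in (v T)..(v M), g u := by
    rw [integral_const_mul, ← hCOV, intervalIntegral.integral_of_le hvT.le,
      integral_Ioc_eq_integral_Ioo]
  constructor
  · calc (∫ t in M..T, h t ^ (1/p)) = ∫ t in Ioo M T, h t ^ (1/p) := e1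
      _ ≤ ∫ t in Ioo M T, C * (|v' t| • g (v t)) := hmono
      _ = C * ∫ u in (v T)..(v M), g u := e2
  · have hvM0 : (0:ℝ) ≤ v M := (hvT0.trans hvT).le
    have hi1 : IntervalIntegrable g volume 0 (v T) :=
      hFint.mono_set (uIcc_subset_uIcc (by simp [uIcc_of_le hvM0, hvM0])
        (by simp [uIcc_of_le hvM0, hvM0, hvT0.le, hvT.le]))
    have hi2 : IntervalIntegrable g volume (v T) (v M) :=
      hFint.mono_set (uIcc_subset_uIcc
        (by simp [uIcc_of_le hvM0, hvM0, hvT0.le, hvT.le])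
        (by simp [uIcc_of_le hvM0, hvM0]))
    have hsplit : (∫ t in (0:ℝ)..(v M), g t) =
        (∫ t in (0:ℝ)..(v T), g t) + ∫ t in (v T)..(v M), g t :=
      (intervalIntegral.integral_add_adjacent_intervals hi1 hi2).symm
    have hnn : 0 ≤ ∫ t in (0:ℝ)..(v T), g t := by
      apply intervalIntegral.integral_nonneg hvT0.le
      intro u hu
      have hb : 0 < F (v M) - F u := by
        have := hFlt u ⟨hu.1, lt_of_le_of_lt hu.2 hvT⟩
        linarith
      have : 0 < (F (v M) - F u) ^ (1/p) := Real.rpow_pos_of_pos hb _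
      simp only [hg]
      positivity
    rw [hsplit]
    nlinarith [intervalIntegral.integral_add_adjacent_intervals hi1 hi2]
end

section
/- Let v solve (|v'|^(p-2)v')' + h(t) f(v) = 0 on [ε₀, d] where p > 1, h > 0 is C¹ with h' < 0, and F (the primitive of f with F(0)=0) satisfies F ≥ -F₀ for some F₀ > 0. Then for all t ∈ [ε₀, d], |v'(t)|^p ≤ |v'(ε₀)|^p + (p/(p-1)) h(ε₀)(F(v(ε₀)) + F₀); i.e., v' is a priori bounded on [ε₀, d] by a constant depending only on the data at ε₀. -/
/-- For `a : ℝ`, `| |a|^(p-2) * a | = |a|^(p-1)`. -/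
lemma abs_W_eq (p : ℝ) (hp : 1 < p) (a : ℝ) :
    |(|a| ^ (p - 2) * a)| = |a| ^ (p - 1) := by
  rcases eq_or_ne a 0 with rfl | ha
  · simp [Real.zero_rpow (by linarith : p - 1 ≠ 0)]
  · have h0 : (0:ℝ) < |a| := abs_pos.mpr ha
    rw [abs_mul, abs_of_nonneg (Real.rpow_nonneg (abs_nonneg a) _),
      ← Real.rpow_add_one h0.ne']
    ring_nf

/-- `||a|^(p-2) a|^(p/(p-1)) = |a|^p`. -/
lemma abs_W_rpow (p : ℝ) (hp : 1 < p) (a : ℝ) :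
    |(|a| ^ (p - 2) * a)| ^ (p / (p - 1)) = |a| ^ p := by
  have hp1 : p - 1 ≠ 0 := by linarith
  rw [abs_W_eq p hp a, ← Real.rpow_mul (abs_nonneg a)]
  congr 1
  field_simp

/-- `|W|^(q-2) * W = a` where `W = |a|^(p-2) a`, `q = p/(p-1)`. -/
lemma abs_W_rpow_mul (p : ℝ) (hp : 1 < p) (a : ℝ) :
    |(|a| ^ (p - 2) * a)| ^ (p / (p - 1) - 2) * (|a| ^ (p - 2) * a) = a := by
  rcases eq_or_ne a 0 with rfl | ha
  · simp
  · have h0 : (0:ℝ) < |a| := abs_pos.mpr ha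
    have hp1 : p - 1 ≠ 0 := by linarith
    rw [abs_W_eq p hp a]
    rw [← Real.rpow_mul (abs_nonneg a), ← mul_assoc, ← Real.rpow_add h0]
    have : (p - 1) * (p / (p - 1) - 2) + (p - 2) = 0 := by field_simp; ring
    rw [this, Real.rpow_zero, one_mul]

theorem stmt_18 (p ε₀ d F₀ : ℝ) (h h' f F v v' : ℝ → ℝ)
    (hp : 1 < p) (hεd : ε₀ < d) (hε₀ : 0 < ε₀) (hF₀ : 0 < F₀)
    (hh : ∀ t ∈ Set.Icc ε₀ d, HasDerivAt h (h' t) t)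
    (hhpos : ∀ t ∈ Set.Icc ε₀ d, 0 < h t)
    (hh'neg : ∀ t ∈ Set.Icc ε₀ d, h' t < 0)
    (hF : ∀ x : ℝ, HasDerivAt F (f x) x) (hF0 : F 0 = 0)
    (hFlb : ∀ u : ℝ, -F₀ ≤ F u)
    (hv : ∀ t ∈ Set.Icc ε₀ d, HasDerivAt v (v' t) t)
    (hode : ∀ t ∈ Set.Icc ε₀ d,
      HasDerivAt (fun s => |v' s| ^ (p - 2) * v' s) (-(h t * f (v t))) t) :
    ∀ t ∈ Set.Icc ε₀ d,
      |v' t| ^ p ≤ |v' ε₀| ^ p + p / (p - 1) * h ε₀ * (F (v ε₀) + F₀) := by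
  have hp1 : (0:ℝ) < p - 1 := by linarith
  have hppos : (0:ℝ) < p := by linarith
  set q : ℝ := p / (p - 1) with hq_def
  have hq : 1 < q := by
    rw [hq_def, lt_div_iff₀ hp1]; linarith
  -- derivative of |v' s|^p
  have dvp : ∀ t ∈ Set.Icc ε₀ d,
      HasDerivAt (fun s => |v' s| ^ p) (q * v' t * -(h t * f (v t))) t := by
    intro t ht
    have hcomp := (hasDerivAt_abs_rpow (|v' t| ^ (p - 2) * v' t) hq).comp t (hode t ht)
    have hfun : (fun s => |(|v' s| ^ (p - 2) * v' s)| ^ q) = (fun s => |v' s| ^ p) := by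
      funext s; exact abs_W_rpow p hp (v' s)
    rw [Function.comp_def, hfun] at hcomp
    refine hcomp.congr_deriv ?_
    symm
    simp only [hq_def]
    linear_combination (p / (p - 1) * (h t * f (v t))) * abs_W_rpow_mul p hp (v' t)
  -- the energy function
  set E : ℝ → ℝ := fun t => (p - 1) / p * |v' t| ^ p + h t * F (v t) + F₀ * h t with hE_def
  have hE : ∀ t ∈ Set.Icc ε₀ d, HasDerivAt E (h' t * (F (v t) + F₀)) t := by
    intro t ht
    have d2 : HasDerivAt (fun s => h s * F (v s))
        (h' t * F (v t) + h t * (f (v t) * v' t)) t :=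
      (hh t ht).mul ((hF (v t)).comp t (hv t ht))
    have d3 := (((dvp t ht).const_mul ((p - 1) / p)).add d2).add ((hh t ht).const_mul F₀)
    refine d3.congr_deriv ?_
    symm
    have hcq : (p - 1) / p * q = 1 := by rw [hq_def]; field_simp
    have expand : (p - 1) / p * (q * v' t * -(h t * f (v t)))
        = ((p - 1) / p * q) * (v' t * -(h t * f (v t))) := by ring
    rw [expand, hcq]
    ring
  -- E is antitone on [ε₀, d]
  have hanti : AntitoneOn E (Set.Icc ε₀ d) := by
    apply antitoneOn_of_deriv_nonpos (convex_Icc ε₀ d)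
    · exact fun t ht => (hE t ht).continuousAt.continuousWithinAt
    · intro t ht
      rw [interior_Icc] at ht
      exact (hE t (Set.mem_Icc_of_Ioo ht)).differentiableAt.differentiableWithinAt
    · intro t ht
      rw [interior_Icc] at ht
      have ht' := Set.mem_Icc_of_Ioo ht
      rw [(hE t ht').deriv]
      have h1 : h' t < 0 := hh'neg t ht'
      have h2 : 0 ≤ F (v t) + F₀ := by linarith [hFlb (v t)]
      exact mul_nonpos_of_nonpos_of_nonneg h1.le h2
  intro t ht
  have hε₀mem : ε₀ ∈ Set.Icc ε₀ d := Set.left_mem_Icc.mpr hεd.le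
  have hle : E t ≤ E ε₀ := hanti hε₀mem ht ht.1
  have hnn : 0 ≤ h t * F (v t) + F₀ * h t := by
    have := hhpos t ht
    have h2 : 0 ≤ F (v t) + F₀ := by linarith [hFlb (v t)]
    nlinarith
  have key : (p - 1) / p * |v' t| ^ p
      ≤ (p - 1) / p * |v' ε₀| ^ p + h ε₀ * (F (v ε₀) + F₀) := by
    have := hle
    simp only [hE_def] at this
    nlinarith
  have hc : (0:ℝ) < p / (p - 1) := by positivity
  have hA := mul_le_mul_of_nonneg_left key hc.le
  calc |v' t| ^ p = p / (p - 1) * ((p - 1) / p * |v' t| ^ p) := by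
        field_simp
    _ ≤ p / (p - 1) * ((p - 1) / p * |v' ε₀| ^ p + h ε₀ * (F (v ε₀) + F₀)) := hA
    _ = |v' ε₀| ^ p + p / (p - 1) * h ε₀ * (F (v ε₀) + F₀) := by
        field_simp
end
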